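/- For every positive integer n, the words a_n = ξ^n(a) and b_n = ξ^n(b) of the period doubling substitution agree in all positions except the last (rightmost) letter: for all indices i < 2^n - 1, the i-th letter of a_n equals the i-th letter of b_n, and the last letters differ. -/

import Mathlib

/-- Alphabet of the period doubling substitution. -/
inductive PDLetter : Type
  | a : PDLetter
  | b : PDLetter

/-- The period doubling substitution: ξ(a) = ab, ξ(b) = aa. -/
def pdXi : PDLetter → List PDLetter
  | PDLetter.a => [PDLetter.a, PDLetter.b]
  | PDLetter.b => [PDLetter.a, PDLetter.a]

/-- Extension of ξ to words by concatenation. -/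
def pdXiWord (w : List PDLetter) : List PDLetter := w.flatMap pdXi

def pdSecond : PDLetter → PDLetter
  | PDLetter.a => PDLetter.b
  | PDLetter.b => PDLetter.a

lemma pdXi_eq (x : PDLetter) : pdXi x = [PDLetter.a, pdSecond x] := by
  cases x <;> rfl

lemma pdSecond_inj {x y : PDLetter} (h : pdSecond x = pdSecond y) : x = y := by
  cases x <;> cases y <;> simp_all [pdSecond]

lemma pdXiWord_append (u v : List PDLetter) :
    pdXiWord (u ++ v) = pdXiWord u ++ pdXiWord v := by
  simp [pdXiWord]

lemma pdXiWord_length (w : List PDLetter) : (pdXiWord w).length = 2 * w.length := by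
  induction w with
  | nil => rfl
  | cons c t iht =>
    show (pdXi c ++ pdXiWord t).length = _
    cases c <;> simp [pdXi, iht] <;> omega

lemma pd_structure (n : ℕ) (hn : 1 ≤ n) :
    ∃ (w : List PDLetter) (x y : PDLetter), x ≠ y ∧ w.length = 2 ^ n - 1 ∧
      pdXiWord^[n] [PDLetter.a] = w ++ [x] ∧
      pdXiWord^[n] [PDLetter.b] = w ++ [y] := by
  induction n with
  | zero => omega
  | succ n ih =>
    rcases Nat.eq_or_lt_of_le hn with h | h
    · refine ⟨[PDLetter.a], PDLetter.b, PDLetter.a, by simp, ?_, ?_, ?_⟩ <;>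
        simp [← h, pdXiWord, pdXi]
    · obtain ⟨w, x, y, hxy, hlen, ha, hb⟩ := ih (by omega)
      refine ⟨pdXiWord w ++ [PDLetter.a], pdSecond x, pdSecond y,
        fun hc => hxy (pdSecond_inj hc), ?_, ?_, ?_⟩
      · have h2 : 1 ≤ 2 ^ n := Nat.one_le_two_pow
        simp [pdXiWord_length, hlen, pow_succ]
        omega
      · rw [Function.iterate_succ_apply', ha, pdXiWord_append]
        simp [pdXiWord, pdXi_eq]
      · rw [Function.iterate_succ_apply', hb, pdXiWord_append]
        simp [pdXiWord, pdXi_eq]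

/-- for n ≥ 1, a_n and b_n agree except at the last letter. -/
theorem pd_agree_except_last (n : ℕ) (hn : 1 ≤ n) :
    (∀ i : ℕ, i < 2 ^ n - 1 →
      (pdXiWord^[n] [PDLetter.a])[i]? = (pdXiWord^[n] [PDLetter.b])[i]?) ∧
    (pdXiWord^[n] [PDLetter.a])[2 ^ n - 1]?
      ≠ (pdXiWord^[n] [PDLetter.b])[2 ^ n - 1]? := by
  obtain ⟨w, x, y, hxy, hlen, ha, hb⟩ := pd_structure n hn
  constructor
  · intro i hi
    rw [ha, hb, List.getElem?_append_left (by omega), List.getElem?_append_left (by omega)]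
  · rw [ha, hb, ← hlen, List.getElem?_append_right (le_refl _),
      List.getElem?_append_right (le_refl _)]
    simp [hxy]
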